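/- Let f : ℝ^d → ℝ be m-strongly convex and L-smooth with minimizer x* and f(x*) = 0, and suppose ‖x̃ − x*‖ ≤ ε and L̃ ≥ L. Then the Gaussian distribution μ̃ = N(x̃, (2L̃)^{−1} I_d) is β̃-warm with respect to π ∝ e^{−f}, with β̃ = exp((d/2) log(2κ L̃/L) + L̃ ε²), where κ = L/m; i.e., μ̃(A) ≤ β̃ Π(A) for every measurable A. -/

import Mathlib

set_option maxHeartbeats 1000000

open MeasureTheory
open scoped RealInnerProductSpace

private lemma gauss_integrable (d : ℕ) {b : ℝ} (hb : 0 < b) :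
    Integrable (fun v : EuclideanSpace ℝ (Fin d) => Real.exp (-b * ‖v‖^2)) := by
  have h := (GaussianFourier.integrable_cexp_neg_mul_sq_norm_add
    (V := EuclideanSpace ℝ (Fin d)) (b := (b:ℂ)) (by simpa) 0 0).norm
  have : ∀ v : EuclideanSpace ℝ (Fin d), (-(b * ((‖v‖:ℂ) ^ 2).re)) = -b * ‖v‖^2 := by
    intro v; norm_cast; ring
  simpa [Complex.norm_exp, this] using h

private lemma gauss_integrable_shift (d : ℕ) {b : ℝ} (hb : 0 < b)
    (c : EuclideanSpace ℝ (Fin d)) :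
    Integrable (fun v : EuclideanSpace ℝ (Fin d) => Real.exp (-b * ‖v - c‖^2)) :=
  (gauss_integrable d hb).comp_sub_right c

private lemma gauss_integral_shift (d : ℕ) {b : ℝ} (hb : 0 < b)
    (c : EuclideanSpace ℝ (Fin d)) :
    ∫ v : EuclideanSpace ℝ (Fin d), Real.exp (-b * ‖v - c‖^2)
      = (Real.pi / b) ^ ((d : ℝ) / 2) := by
  rw [integral_sub_right_eq_self (fun v : EuclideanSpace ℝ (Fin d) => Real.exp (-b * ‖v‖^2)) c]
  rw [GaussianFourier.integral_rexp_neg_mul_sq_norm hb]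
  norm_num [finrank_euclideanSpace]

/-- If `f` is `m`-strongly convex and `L`-smooth with minimizer `x*`, `f(x*) = 0`,
`‖x̃ - x*‖ ≤ ε` and `L̃ ≥ L`, then `μ̃ = N(x̃, (2L̃)⁻¹ I_d)` is `β̃`-warm with respect to
`Π ∝ e^{-f}`, where `β̃ = exp((d/2) log(2 κ L̃ / L) + L̃ ε²)` and `κ = L/m`. -/
theorem inexact_start_warmness (d : ℕ) (f : EuclideanSpace ℝ (Fin d) → ℝ)
    (m L Lt ε : ℝ) (hm : 0 < m) (hmL : m ≤ L) (hLt : L ≤ Lt) (hε : 0 ≤ ε)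
    (hdiff : Differentiable ℝ f)
    (hsc : ∀ x y : EuclideanSpace ℝ (Fin d),
      f x + ⟪gradient f x, y - x⟫ + m / 2 * ‖x - y‖ ^ 2 ≤ f y)
    (hsmooth : ∀ x y : EuclideanSpace ℝ (Fin d),
      f y ≤ f x + ⟪gradient f x, y - x⟫ + L / 2 * ‖x - y‖ ^ 2)
    (xs xt : EuclideanSpace ℝ (Fin d))
    (hmin : ∀ y, f xs ≤ f y) (hfxs : f xs = 0)
    (hclose : ‖xt - xs‖ ≤ ε) :
    ∀ A : Set (EuclideanSpace ℝ (Fin d)), MeasurableSet A →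
      volume.withDensity (fun x =>
          ENNReal.ofReal ((Lt / Real.pi) ^ ((d : ℝ) / 2) * Real.exp (-Lt * ‖x - xt‖ ^ 2))) A
        ≤ ENNReal.ofReal
            (Real.exp ((d : ℝ) / 2 * Real.log (2 * (L / m) * Lt / L) + Lt * ε ^ 2)) *
          volume.withDensity (fun x =>
            ENNReal.ofReal (Real.exp (-f x)
              / ∫ y : EuclideanSpace ℝ (Fin d), Real.exp (-f y))) A := by
  have hL : 0 < L := hm.trans_le hmL
  have hLt0 : 0 < Lt := hL.trans_le hLt
  have hπ : 0 < Real.pi := Real.pi_pos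
  -- gradient at the minimizer is zero
  have hg : gradient f xs = 0 := by
    set g := gradient f xs with hgdef
    have h1 := hsmooth xs (xs - L⁻¹ • g)
    have h2 := hmin (xs - L⁻¹ • g)
    have e1 : (xs - L⁻¹ • g) - xs = -(L⁻¹ • g) := by abel
    have e2 : ⟪g, (xs - L⁻¹ • g) - xs⟫ = -(L⁻¹ * ‖g‖^2) := by
      rw [e1, inner_neg_right, real_inner_smul_right, real_inner_self_eq_norm_sq]
    have e3 : ‖xs - (xs - L⁻¹ • g)‖ = L⁻¹ * ‖g‖ := by
      have : xs - (xs - L⁻¹ • g) = L⁻¹ • g := by abel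
      rw [this, norm_smul, Real.norm_eq_abs, abs_of_pos (by positivity)]
    rw [hfxs, e2, e3] at h1
    rw [hfxs] at h2
    have h3 : (0:ℝ) ≤ -(L⁻¹ * ‖g‖^2) + L / 2 * (L⁻¹ * ‖g‖)^2 := by linarith
    have h4 : -(L⁻¹ * ‖g‖^2) + L / 2 * (L⁻¹ * ‖g‖)^2 = -(‖g‖^2 / (2 * L)) := by
      field_simp; ring
    rw [h4] at h3
    have h6 : ‖g‖^2 / (2 * L) * (2 * L) = ‖g‖^2 := div_mul_cancel₀ _ (by positivity)
    have hgsq : ‖g‖^2 ≤ 0 := by nlinarith [h3, h6, hL]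
    have : ‖g‖ = 0 := by nlinarith [sq_nonneg ‖g‖, norm_nonneg g]
    exact norm_eq_zero.mp this
  -- bounds on f
  have hup : ∀ x, f x ≤ L / 2 * ‖x - xs‖ ^ 2 := by
    intro x
    have h := hsmooth xs x
    rw [hg, hfxs, inner_zero_left, norm_sub_rev] at h
    linarith
  have hlow : ∀ x, m / 2 * ‖x - xs‖ ^ 2 ≤ f x := by
    intro x
    have h := hsc xs x
    rw [hg, hfxs, inner_zero_left, norm_sub_rev] at h
    linarith
  have hfc : Continuous f := hdiff.continuous
  have hcont : Continuous fun x : EuclideanSpace ℝ (Fin d) => Real.exp (-f x) :=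
    Real.continuous_exp.comp hfc.neg
  -- integrability of exp(-f)
  have hintU := gauss_integrable_shift d (b := m / 2) (by positivity) xs
  have hintL := gauss_integrable_shift d (b := L / 2) (by positivity) xs
  have hint : Integrable fun x : EuclideanSpace ℝ (Fin d) => Real.exp (-f x) := by
    refine hintU.mono' hcont.aestronglyMeasurable (Filter.Eventually.of_forall fun x => ?_)
    rw [Real.norm_eq_abs, abs_of_pos (Real.exp_pos _)]
    exact Real.exp_le_exp.mpr (by have := hlow x; linarith)
  set Z := ∫ y : EuclideanSpace ℝ (Fin d), Real.exp (-f y) with hZdef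
  clear_value Z
  have hZub : Z ≤ (Real.pi / (m / 2)) ^ ((d : ℝ) / 2) := by
    rw [hZdef, ← gauss_integral_shift d (by positivity : (0:ℝ) < m / 2) xs]
    refine integral_mono hint hintU fun x => ?_
    exact Real.exp_le_exp.mpr (by have := hlow x; linarith)
  have hZpos : 0 < Z := by
    have h1 : (Real.pi / (L / 2)) ^ ((d : ℝ) / 2) ≤ Z := by
      rw [hZdef, ← gauss_integral_shift d (by positivity : (0:ℝ) < L / 2) xs]
      refine integral_mono hintL hint fun x => ?_
      exact Real.exp_le_exp.mpr (by have := hup x; linarith)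
    have : (0:ℝ) < (Real.pi / (L / 2)) ^ ((d : ℝ) / 2) := by positivity
    linarith
  set C := Real.exp ((d : ℝ) / 2 * Real.log (2 * (L / m) * Lt / L) + Lt * ε ^ 2) with hCdef
  clear_value C
  have hC0 : (0:ℝ) ≤ C := by rw [hCdef]; positivity
  have hCval : C = (2 * Lt / m) ^ ((d : ℝ) / 2) * Real.exp (Lt * ε ^ 2) := by
    have harg : 2 * (L / m) * Lt / L = 2 * Lt / m := by field_simp
    rw [hCdef, harg, Real.exp_add,
      Real.rpow_def_of_pos (by positivity : (0:ℝ) < 2 * Lt / m), mul_comm (Real.log _)]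
  -- key pointwise inequality
  have key : ∀ x : EuclideanSpace ℝ (Fin d),
      (Lt / Real.pi) ^ ((d : ℝ) / 2) * Real.exp (-Lt * ‖x - xt‖ ^ 2) * Z
        ≤ C * Real.exp (-f x) := by
    intro x
    have hs0 : (0:ℝ) ≤ ‖x - xs‖ ^ 2 := sq_nonneg _
    have hq0 : (0:ℝ) ≤ ‖x - xt‖ ^ 2 := sq_nonneg _
    have htri : ‖x - xs‖ ≤ ‖x - xt‖ + ‖xt - xs‖ := by
      have := dist_triangle x xt xs
      simpa [dist_eq_norm] using this
    have hsq : ‖x - xs‖ ^ 2 ≤ 2 * ‖x - xt‖ ^ 2 + 2 * ε ^ 2 := by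
      have h1 : ‖x - xs‖ ^ 2 ≤ (‖x - xt‖ + ‖xt - xs‖) ^ 2 :=
        pow_le_pow_left₀ (norm_nonneg _) htri 2
      have h2 : (‖x - xt‖ + ‖xt - xs‖) ^ 2 ≤ 2 * ‖x - xt‖ ^ 2 + 2 * ‖xt - xs‖ ^ 2 := by
        nlinarith [sq_nonneg (‖x - xt‖ - ‖xt - xs‖)]
      have h3 : ‖xt - xs‖ ^ 2 ≤ ε ^ 2 := pow_le_pow_left₀ (norm_nonneg _) hclose 2
      linarith
    have hexp : -Lt * ‖x - xt‖ ^ 2 ≤ Lt * ε ^ 2 - L / 2 * ‖x - xs‖ ^ 2 := by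
      have h1 := mul_le_mul_of_nonneg_left hsq hLt0.le
      have h2 : L * ‖x - xs‖ ^ 2 ≤ Lt * ‖x - xs‖ ^ 2 :=
        mul_le_mul_of_nonneg_right hLt hs0
      have h1' : Lt * ‖x - xs‖ ^ 2 ≤ 2 * (Lt * ‖x - xt‖ ^ 2) + 2 * (Lt * ε ^ 2) := by
        linear_combination h1
      linarith
    have hbase : Lt / Real.pi * (Real.pi / (m / 2)) = 2 * Lt / m := by
      field_simp
    calc (Lt / Real.pi) ^ ((d : ℝ) / 2) * Real.exp (-Lt * ‖x - xt‖ ^ 2) * Z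
        ≤ (Lt / Real.pi) ^ ((d : ℝ) / 2) * Real.exp (-Lt * ‖x - xt‖ ^ 2)
            * (Real.pi / (m / 2)) ^ ((d : ℝ) / 2) := by
          apply mul_le_mul_of_nonneg_left hZub (by positivity)
      _ = (2 * Lt / m) ^ ((d : ℝ) / 2) * Real.exp (-Lt * ‖x - xt‖ ^ 2) := by
          rw [mul_right_comm, ← Real.mul_rpow (by positivity) (by positivity), hbase]
      _ ≤ (2 * Lt / m) ^ ((d : ℝ) / 2)
            * Real.exp (Lt * ε ^ 2 - L / 2 * ‖x - xs‖ ^ 2) := by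
          apply mul_le_mul_of_nonneg_left (Real.exp_le_exp.mpr hexp) (by positivity)
      _ = C * Real.exp (-(L / 2 * ‖x - xs‖ ^ 2)) := by
          rw [hCval, mul_assoc, ← Real.exp_add]; ring_nf
      _ ≤ C * Real.exp (-f x) := by
          apply mul_le_mul_of_nonneg_left
            (Real.exp_le_exp.mpr (by have := hup x; linarith)) hC0
  -- assemble
  intro A hA
  rw [withDensity_apply _ hA, withDensity_apply _ hA]
  have hmeasσ : Measurable fun x : EuclideanSpace ℝ (Fin d) =>
      ENNReal.ofReal (Real.exp (-f x) / Z) :=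
    ((hcont.div_const Z).measurable).ennreal_ofReal
  calc ∫⁻ x in A, ENNReal.ofReal
          ((Lt / Real.pi) ^ ((d : ℝ) / 2) * Real.exp (-Lt * ‖x - xt‖ ^ 2)) ∂volume
      ≤ ∫⁻ x in A, ENNReal.ofReal C * ENNReal.ofReal (Real.exp (-f x) / Z) ∂volume := by
        refine lintegral_mono fun x => ?_
        rw [← ENNReal.ofReal_mul hC0]
        apply ENNReal.ofReal_le_ofReal
        rw [mul_div_assoc', le_div_iff₀ hZpos]
        exact key x
    _ = ENNReal.ofReal C * ∫⁻ x in A, ENNReal.ofReal (Real.exp (-f x) / Z) ∂volume :=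
        lintegral_const_mul _ hmeasσ
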